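/- Non-degenerate interventions in linear models imply node-level non-degeneracy (Lemma 7.1 / assumptions-relation). Let G be a DAG on [d] and K ≥ 1. For each node i and each k ∈ [K], let w_k(i) ∈ ℝ^{|pa_G(i)|} and ω_{k,i} > 0, and let ρ_i : ℝ → (0,∞) be a differentiable probability density. Define conditional densities p̂_k(z_i | z_{pa_G(i)}) = ω_{k,i}^{−1/2} ρ_i(ω_{k,i}^{−1/2}(z_i − ⟨w_k(i), z_{pa_G(i)}⟩)) (the conditional densities induced by the linear structural equation z_i = ⟨w_k(i), z_{pa_G(i)}⟩ + ω_{k,i}^{1/2} ε_i with ε_i distributed with density ρ_i). Suppose that for each node i ∈ [d] the family {p̂_k(·|·)}_{k∈[K]} is non-degenerate on node i at some point ẑ ∈ ℝ^d. Then, letting A_k ∈ ℝ^{d×d} be the matrix with (A_k)_{ij} = (w_k(i))_j for j ∈ pa_G(i) and 0 otherwise, Ω_k = diag(ω_{k,1},…,ω_{k,d}), and B_k = Ω_k^{−1/2}(I − A_k), the family {B_k}_{k∈[K]} is node-level non-degenerate: for every i ∈ [d], dim span{(B_k)_i : k ∈ [K]} = |pa_G(i)| + 1. -/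

import Mathlib

open Matrix MeasureTheory

/-- `E i j` means there is a directed edge `i → j`. A DAG has no directed cycles. -/
def IsDAG {d : ℕ} (E : Fin d → Fin d → Prop) : Prop :=
  ∀ i, ¬ Relation.TransGen E i i

/-- The set of parents of `i`. -/
def pa {d : ℕ} (E : Fin d → Fin d → Prop) (i : Fin d) : Set (Fin d) := {j | E j i}

/-- The set of children of `i`. -/
def ch {d : ℕ} (E : Fin d → Fin d → Prop) (i : Fin d) : Set (Fin d) := {j | E i j}

/-- `pa_G(i) ∪ {i}`. -/
def barPa {d : ℕ} (E : Fin d → Fin d → Prop) (i : Fin d) : Set (Fin d) := insert i (pa E i)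

/-- `ch_G(i) ∪ {i}`. -/
def barCh {d : ℕ} (E : Fin d → Fin d → Prop) (i : Fin d) : Set (Fin d) := insert i (ch E i)

/-- The effect-domination set `dom_G(i) = {j ∈ pa_G(i) : ch_G(i) ⊆ ch_G(j)}`. -/
def domSet {d : ℕ} (E : Fin d → Fin d → Prop) (i : Fin d) : Set (Fin d) :=
  {j | j ∈ pa E i ∧ ch E i ⊆ ch E j}

/-- `dom_G(i) ∪ {i}`. -/
def barDom {d : ℕ} (E : Fin d → Fin d → Prop) (i : Fin d) : Set (Fin d) :=
  insert i (domSet E i)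

/-- Ancestors of `i`: nodes with a directed path to `i`. -/
def ans {d : ℕ} (E : Fin d → Fin d → Prop) (i : Fin d) : Set (Fin d) :=
  {j | Relation.TransGen E j i}

/-- A set is ancestral if it is closed under taking ancestors. -/
def Ancestral {d : ℕ} (E : Fin d → Fin d → Prop) (S : Set (Fin d)) : Prop :=
  ∀ j ∈ S, ans E j ⊆ S

/-- The support of `B` matches the graph: `B i j ≠ 0 ↔ j ∈ \bar{pa}_G(i)`. -/
def SupportMatches {d : ℕ} (E : Fin d → Fin d → Prop) (B : Matrix (Fin d) (Fin d) ℝ) : Prop :=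
  ∀ i j, B i j ≠ 0 ↔ j ∈ barPa E i

/-- Node-level non-degeneracy: for every node `i`, the span of the `i`-th rows
`(B_k)_i` has dimension `|pa_G(i)| + 1`. -/
def NodeNonDegenerate {d K : ℕ} (E : Fin d → Fin d → Prop)
    (B : Fin K → Matrix (Fin d) (Fin d) ℝ) : Prop :=
  ∀ i, Module.finrank ℝ (Submodule.span ℝ (Set.range fun k => B k i)) = (pa E i).ncard + 1

/-- A function `f : ℝ^d → ℝ` depends only on the coordinates in `S`. -/
def DependsOnlyOn {d : ℕ} (S : Set (Fin d)) (f : (Fin d → ℝ) → ℝ) : Prop :=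
  ∀ z z' : Fin d → ℝ, (∀ j ∈ S, z j = z' j) → f z = f z'

/-- Non-degeneracy (Definition 7.1) of a family of conditional densities at node `i`
at the point `ẑ`, with distinguished base density `p e₀`: all densities are positive
at `ẑ`, and the matrix `[∂(p_{e₀}/p_e)/∂z_j]` (rows `e`, columns `j ∈ \bar{pa}_G(i)`)
has full column rank, i.e. its rows span all of `ℝ^{\bar{pa}_G(i)}`. -/
def NonDegenerateAt {d : ℕ} {ι : Type*} (E : Fin d → Fin d → Prop) (i : Fin d)
    (p : ι → (Fin d → ℝ) → ℝ) (e₀ : ι) (zhat : Fin d → ℝ) : Prop :=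
  (∀ e, 0 < p e zhat) ∧
  Submodule.span ℝ (Set.range fun e : ι =>
      fun j : barPa E i =>
        fderiv ℝ (fun z => p e₀ z / p e z) zhat (Pi.single (j : Fin d) 1)) = ⊤

/-- Non-degenerate interventions in linear models imply node-level non-degeneracy
(Lemma 7.1): if at every node the family of linear-Gaussian-type conditional densities
induced by `z_i = ⟨w_k(i), z_{pa(i)}⟩ + ω_{k,i}^{1/2} ε_i` is non-degenerate at some
point, then the matrices `B_k = Ω_k^{-1/2}(I - A_k)` are node-level non-degenerate. -/

lemma aux_fderiv' {E : Type*} [NormedAddCommGroup E] [NormedSpace ℝ E]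
    (f g : ℝ → ℝ) (hf : Differentiable ℝ f) (hg : Differentiable ℝ g)
    (hgpos : ∀ t, 0 < g t) (c₀ ce : ℝ) (hce : 0 < ce)
    (L M : E →L[ℝ] ℝ) (x : E) :
    ∃ a c : ℝ, fderiv ℝ (fun z => (c₀ * f (L z)) / (ce * g (M z))) x = a • L + c • M := by
  have hGx : ce * g (M x) ≠ 0 := by have := hgpos (M x); positivity
  have hF : HasFDerivAt (fun z : E => c₀ * f (L z)) ((c₀ * deriv f (L x)) • L) x := by
    have h1 : HasFDerivAt (fun z : E => f (L z)) (deriv f (L x) • L) x :=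
      ((hf (L x)).hasDerivAt).comp_hasFDerivAt x (L.hasFDerivAt)
    simpa [smul_smul] using h1.const_mul c₀
  have hG : HasFDerivAt (fun z : E => ce * g (M z)) ((ce * deriv g (M x)) • M) x := by
    have h1 : HasFDerivAt (fun z : E => g (M z)) (deriv g (M x) • M) x :=
      ((hg (M x)).hasDerivAt).comp_hasFDerivAt x (M.hasFDerivAt)
    simpa [smul_smul] using h1.const_mul ce
  have hInv : HasFDerivAt (fun z : E => (ce * g (M z))⁻¹)
      ((-((ce * g (M x)) ^ 2)⁻¹) • ((ce * deriv g (M x)) • M)) x := by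
    have h2 : HasDerivAt Inv.inv (-((ce * g (M x)) ^ 2)⁻¹) (ce * g (M x)) := hasDerivAt_inv hGx
    exact h2.comp_hasFDerivAt x hG
  have hmul := hF.mul hInv
  have heq : (fun z : E => (c₀ * f (L z)) / (ce * g (M z)))
      = fun z : E => (c₀ * f (L z)) * (ce * g (M z))⁻¹ := by
    funext z; rw [div_eq_mul_inv]
  refine ⟨(ce * g (M x))⁻¹ * (c₀ * deriv f (L x)),
    (c₀ * f (L x)) * (-((ce * g (M x)) ^ 2)⁻¹ * (ce * deriv g (M x))), ?_⟩
  rw [heq, HasFDerivAt.fderiv (f := fun z : E => c₀ * f (L z) * (ce * g (M z))⁻¹) hmul]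
  rw [smul_smul, smul_smul, smul_smul, add_comm, mul_assoc]

theorem nondegenerate_interventions_imply_node_nondegeneracy
    {d K : ℕ} (hK : 0 < K)
    (E : Fin d → Fin d → Prop) (hG : IsDAG E)
    -- weight matrices: `w k i j = (w_k(i))_j` for `j ∈ pa_G(i)`, `0` otherwise
    (w : Fin K → Matrix (Fin d) (Fin d) ℝ)
    (hw : ∀ k i j, j ∉ pa E i → w k i j = 0)
    (ω : Fin K → Fin d → ℝ) (hω : ∀ k i, 0 < ω k i)
    -- the noise densities
    (ρ : Fin d → ℝ → ℝ)
    (hρpos : ∀ i t, 0 < ρ i t)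
    (hρdiff : ∀ i, Differentiable ℝ (ρ i))
    (hρprob : ∀ i, ∫ t : ℝ, ρ i t = 1)
    -- the induced conditional densities
    (p : Fin K → Fin d → (Fin d → ℝ) → ℝ)
    (hp : ∀ k i (z : Fin d → ℝ), p k i z =
        (Real.sqrt (ω k i))⁻¹ *
          ρ i ((Real.sqrt (ω k i))⁻¹ * (z i - ∑ j, w k i j * z j)))
    -- non-degeneracy at some point, for each node
    (hnd : ∀ i, ∃ zhat : Fin d → ℝ,
        NonDegenerateAt E i (fun k => p k i) (⟨0, hK⟩ : Fin K) zhat)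
    (B : Fin K → Matrix (Fin d) (Fin d) ℝ)
    (hB : ∀ k, B k = Matrix.diagonal (fun i => (Real.sqrt (ω k i))⁻¹) * (1 - w k)) :
    NodeNonDegenerate E B := by
  intro i
  obtain ⟨zhat, hpos, hspan⟩ := hnd i
  have hii : i ∉ pa E i := fun h => hG i (Relation.TransGen.single h)
  set e₀ : Fin K := ⟨0, hK⟩ with he₀
  -- entries of B
  have hBij : ∀ k j, B k i j
      = (Real.sqrt (ω k i))⁻¹ * ((if i = j then (1:ℝ) else 0) - w k i j) := by
    intro k j
    simp [hB, Matrix.diagonal_mul, Matrix.sub_apply, Matrix.one_apply]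
  have hsupp : ∀ k j, j ∉ barPa E i → B k i j = 0 := by
    intro k j hj
    rw [barPa, Set.mem_insert_iff] at hj
    push_neg at hj
    rw [hBij, if_neg (fun h => hj.1 h.symm), hw k i j hj.2]
    simp
  -- the linear functionals given by rows of B
  set ℓ : Fin K → (Fin d → ℝ) →L[ℝ] ℝ :=
    fun k => ∑ j, B k i j • ContinuousLinearMap.proj j with hℓdef
  have hℓ : ∀ k (z : Fin d → ℝ), ℓ k z = ∑ j, B k i j * z j := by
    intro k z; simp [hℓdef, ContinuousLinearMap.sum_apply]
  have hℓs : ∀ k (j : Fin d), ℓ k (Pi.single j 1) = B k i j := by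
    intro k j; simp [hℓdef, ContinuousLinearMap.sum_apply, Pi.single_apply]
  -- rewriting the densities
  have hpeq : ∀ k (z : Fin d → ℝ), p k i z = (Real.sqrt (ω k i))⁻¹ * ρ i (ℓ k z) := by
    intro k z
    rw [hp]
    congr 2
    rw [hℓ]
    have hterm : ∀ j : Fin d, B k i j * z j
        = (Real.sqrt (ω k i))⁻¹ * ((if i = j then (1:ℝ) else 0) * z j)
          - (Real.sqrt (ω k i))⁻¹ * (w k i j * z j) := by
      intro j; rw [hBij]; ring
    rw [Finset.sum_congr rfl (fun j _ => hterm j), Finset.sum_sub_distrib,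
      ← Finset.mul_sum, ← Finset.mul_sum, ← mul_sub]
    congr 2
    simp
  -- the key derivative identity
  have hkey : ∀ e : Fin K, ∃ a c : ℝ,
      fderiv ℝ (fun z => p e₀ i z / p e i z) zhat = a • ℓ e₀ + c • ℓ e := by
    intro e
    have hfun : (fun z => p e₀ i z / p e i z)
        = fun z => ((Real.sqrt (ω e₀ i))⁻¹ * ρ i (ℓ e₀ z))
            / ((Real.sqrt (ω e i))⁻¹ * ρ i (ℓ e z)) := by
      funext z; rw [hpeq, hpeq]
    rw [hfun]
    exact aux_fderiv' (ρ i) (ρ i) (hρdiff i) (hρdiff i) (hρpos i) _ _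
      (by have := hω e i; positivity) (ℓ e₀) (ℓ e) zhat
  -- restriction map to coordinates in barPa
  set π : (Fin d → ℝ) →ₗ[ℝ] (↥(barPa E i) → ℝ) :=
    LinearMap.funLeft ℝ ℝ (Subtype.val) with hπdef
  set S : Submodule ℝ (Fin d → ℝ) := Submodule.span ℝ (Set.range fun k => B k i) with hSdef
  -- the span vectors lie in the image of S
  have hsub : (Set.range fun e : Fin K =>
      fun j : barPa E i =>
        fderiv ℝ (fun z => p e₀ i z / p e i z) zhat (Pi.single (j : Fin d) 1))
      ⊆ ↑(S.map π) := by
    rintro _ ⟨e, rfl⟩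
    obtain ⟨a, c, hac⟩ := hkey e
    refine ⟨a • B e₀ i + c • B e i, ?_, ?_⟩
    · exact Submodule.add_mem _
        (Submodule.smul_mem _ _ (Submodule.subset_span ⟨e₀, rfl⟩))
        (Submodule.smul_mem _ _ (Submodule.subset_span ⟨e, rfl⟩))
    · funext j
      show π (a • B e₀ i + c • B e i) j
        = fderiv ℝ (fun z => p e₀ i z / p e i z) zhat (Pi.single (j : Fin d) 1)
      rw [hac]
      simp [hπdef, LinearMap.funLeft_apply, hℓs]
  have htop : S.map π = ⊤ := by
    have hle : Submodule.span ℝ (Set.range fun e : Fin K =>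
        fun j : barPa E i =>
          fderiv ℝ (fun z => p e₀ i z / p e i z) zhat (Pi.single (j : Fin d) 1))
        ≤ S.map π := Submodule.span_le.mpr hsub
    rw [hspan] at hle
    exact top_le_iff.mp hle
  -- the support submodule
  have hSU : ∀ v ∈ S, ∀ j, j ∉ barPa E i → v j = 0 := by
    let U : Submodule ℝ (Fin d → ℝ) :=
      { carrier := {v | ∀ j, j ∉ barPa E i → v j = 0}
        add_mem' := fun hv hw' j hj => by
          simp only [Set.mem_setOf_eq] at *
          rw [Pi.add_apply, hv j hj, hw' j hj, add_zero]
        zero_mem' := fun j _ => rfl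
        smul_mem' := fun c v hv j hj => by
          simp only [Set.mem_setOf_eq] at *
          rw [Pi.smul_apply, hv j hj, smul_zero] }
    have : S ≤ U := Submodule.span_le.mpr (by rintro _ ⟨k, rfl⟩; exact fun j hj => hsupp k j hj)
    exact fun v hv => this hv
  -- φ : S ≃ functions on barPa
  set φ : ↥S →ₗ[ℝ] (↥(barPa E i) → ℝ) := π.comp S.subtype with hφdef
  have hinj : Function.Injective φ := by
    rw [← LinearMap.ker_eq_bot]
    rw [Submodule.eq_bot_iff]
    rintro ⟨x, hx⟩ hker
    have hker' : π x = 0 := hker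
    ext j
    by_cases hj : j ∈ barPa E i
    · have := congrFun hker' ⟨j, hj⟩
      simpa [hπdef, LinearMap.funLeft_apply] using this
    · exact hSU x hx j hj
  have hsurj : Function.Surjective φ := by
    rw [← LinearMap.range_eq_top, hφdef, LinearMap.range_comp, Submodule.range_subtype]
    exact htop
  haveI : Fintype ↥(barPa E i) := (Set.toFinite _).fintype
  have hfr : Module.finrank ℝ ↥S = Module.finrank ℝ (↥(barPa E i) → ℝ) :=
    (LinearEquiv.ofBijective φ ⟨hinj, hsurj⟩).finrank_eq
  rw [hSdef] at hfr
  rw [hfr, Module.finrank_fintype_fun_eq_card, ← Nat.card_eq_fintype_card,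
    Nat.card_coe_set_eq, barPa, Set.ncard_insert_of_notMem hii]
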